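/- Let 0 < d < n be integers, let E ⊆ ℝⁿ, let V be a d-dimensional linear subspace of ℝⁿ, let θ ∈ (0, π/2) and 0 < r < ∞, and suppose that for every a ∈ E, E ∩ B(a,r) \ {a} ⊆ X(a,V,θ). Then: (i) if diam E < r, then |Π_V a − Π_V b| ≥ cos θ · |a − b| for all a, b ∈ E, where Π_V is the orthogonal projection onto V; hence Π_V restricted to E is injective and its inverse is Lipschitz with constant 1/cos θ; and (ii) in general, E is d-rectifiable. -/

import Mathlib

open Set Metric MeasureTheory ENNReal Filter Topology

noncomputable def hContent {n : ℕ} (d : ℕ) (A : Set (EuclideanSpace ℝ (Fin n))) : ℝ≥0∞ :=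
  ⨅ (C : ℕ → Set (EuclideanSpace ℝ (Fin n))) (_ : A ⊆ ⋃ i, C i),
    ∑' i, EMetric.diam (C i) ^ d

def LowerContentRegular {n : ℕ} (d : ℕ) (c₀ : ℝ) (E : Set (EuclideanSpace ℝ (Fin n))) : Prop :=
  ∀ x ∈ E, ∀ r : ℝ, 0 < r → ENNReal.ofReal r < EMetric.diam E →
    ENNReal.ofReal (c₀ * r ^ d) ≤ hContent d (E ∩ ball x r)

def IsAffinePlane {n : ℕ} (d : ℕ) (L : Set (EuclideanSpace ℝ (Fin n))) : Prop :=
  ∃ (z : EuclideanSpace ℝ (Fin n)) (V : Submodule ℝ (EuclideanSpace ℝ (Fin n))),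
    Module.finrank ℝ V = d ∧ L = {y | y - z ∈ V}

noncomputable def beta {n : ℕ} (d : ℕ) (p : ℝ) (E : Set (EuclideanSpace ℝ (Fin n)))
    (x : EuclideanSpace ℝ (Fin n)) (r : ℝ) : ℝ≥0∞ :=
  ⨅ (L : Set (EuclideanSpace ℝ (Fin n))) (_ : IsAffinePlane d L),
    ((∫⁻ t in Ioo (0:ℝ) 1,
        hContent d {y | y ∈ ball x r ∩ E ∧ t * r < infDist y L} *
          ENNReal.ofReal (t ^ (p - 1))) / ENNReal.ofReal r ^ d) ^ (1 / p)

def TangentPoint {n : ℕ} (d : ℕ) (E : Set (EuclideanSpace ℝ (Fin n)))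
    (x : EuclideanSpace ℝ (Fin n)) : Prop :=
  ∃ L : Set (EuclideanSpace ℝ (Fin n)), IsAffinePlane d L ∧
    Tendsto (fun t : ℝ => ⨆ y ∈ E ∩ ball x t, infDist y L / t) (𝓝[>] 0) (𝓝 0)

variable {n : ℕ}

lemma norm_sub_proj_le_infDist (V : Submodule ℝ (EuclideanSpace ℝ (Fin n)))
    (x : EuclideanSpace ℝ (Fin n)) :
    ‖x - (Submodule.orthogonalProjection V x : EuclideanSpace ℝ (Fin n))‖ ≤
      infDist x (V : Set (EuclideanSpace ℝ (Fin n))) := by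
  rw [infDist_eq_iInf]
  refine le_ciInf fun y => ?_
  have hm : ‖x - (Submodule.orthogonalProjection V x : EuclideanSpace ℝ (Fin n))‖ =
      ⨅ z : V, ‖x - z‖ := Submodule.starProjection_minimal x
  rw [dist_eq_norm, hm]
  exact ciInf_le ⟨0, Set.forall_mem_range.mpr fun _ => norm_nonneg _⟩ (⟨y.1, y.2⟩ : V)

lemma proj_lower (V : Submodule ℝ (EuclideanSpace ℝ (Fin n)))
    {θ : ℝ} (hθ : θ ∈ Set.Ioo 0 (Real.pi / 2))
    {a b : EuclideanSpace ℝ (Fin n)}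
    (h : infDist (b - a) (V : Set (EuclideanSpace ℝ (Fin n))) < Real.sin θ * dist b a) :
    Real.cos θ * dist a b ≤
      dist ((Submodule.orthogonalProjection V a : EuclideanSpace ℝ (Fin n)))
        ((Submodule.orthogonalProjection V b : EuclideanSpace ℝ (Fin n))) := by
  have hs : 0 < Real.sin θ :=
    Real.sin_pos_of_pos_of_lt_pi hθ.1 (lt_trans hθ.2 (by linarith [Real.pi_pos]))
  have hc : 0 < Real.cos θ := by
    apply Real.cos_pos_of_mem_Ioo
    constructor
    · linarith [hθ.1, Real.pi_pos]
    · exact hθ.2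
  have hdeq : dist ((Submodule.orthogonalProjection V a : EuclideanSpace ℝ (Fin n)))
      ((Submodule.orthogonalProjection V b : EuclideanSpace ℝ (Fin n)))
      = ‖(Submodule.orthogonalProjection V (b - a) : EuclideanSpace ℝ (Fin n))‖ := by
    rw [dist_eq_norm', ← Submodule.coe_sub, ← map_sub]
  have hab : dist a b = ‖b - a‖ := dist_eq_norm' a b
  have hab' : dist b a = ‖b - a‖ := dist_eq_norm b a
  set x := b - a with hx
  have hq : ‖x - (Submodule.orthogonalProjection V x : EuclideanSpace ℝ (Fin n))‖ < Real.sin θ * ‖x‖ := by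
    calc ‖x - (Submodule.orthogonalProjection V x : EuclideanSpace ℝ (Fin n))‖
        ≤ infDist x (V : Set (EuclideanSpace ℝ (Fin n))) := norm_sub_proj_le_infDist V x
      _ < Real.sin θ * ‖x‖ := by rw [← hab']; exact h
  have hp : ‖x‖ * ‖x‖ = ‖x - (Submodule.orthogonalProjection V x : EuclideanSpace ℝ (Fin n))‖ *
      ‖x - (Submodule.orthogonalProjection V x : EuclideanSpace ℝ (Fin n))‖ +
      ‖(Submodule.orthogonalProjection V x : EuclideanSpace ℝ (Fin n))‖ *
      ‖(Submodule.orthogonalProjection V x : EuclideanSpace ℝ (Fin n))‖ :=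
    Submodule.orthogonalProjectionFn_norm_sq V x
  have hxpos : 0 < ‖x‖ := by
    by_contra hxn
    push_neg at hxn
    have : ‖x‖ = 0 := le_antisymm hxn (norm_nonneg _)
    nlinarith [norm_nonneg (x - (Submodule.orthogonalProjection V x : EuclideanSpace ℝ (Fin n)))]
  have h2 : ‖x - (Submodule.orthogonalProjection V x : EuclideanSpace ℝ (Fin n))‖ ^ 2
      < (Real.sin θ * ‖x‖) ^ 2 := by
    nlinarith [hq, norm_nonneg (x - (Submodule.orthogonalProjection V x : EuclideanSpace ℝ (Fin n))),
      mul_pos hs hxpos]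
  rw [hdeq, hab]
  nlinarith [Real.sin_sq_add_cos_sq θ, norm_nonneg (Submodule.orthogonalProjection V x : EuclideanSpace ℝ (Fin n)),
    norm_nonneg (x - (Submodule.orthogonalProjection V x : EuclideanSpace ℝ (Fin n))),
    sq_nonneg (‖(Submodule.orthogonalProjection V x : EuclideanSpace ℝ (Fin n))‖ - Real.cos θ * ‖x‖),
    sq_nonneg (‖(Submodule.orthogonalProjection V x : EuclideanSpace ℝ (Fin n))‖ + Real.cos θ * ‖x‖),
    mul_pos hs hxpos, mul_pos hc hxpos, h2, hp]

lemma lip_inv {c : ℝ} (hc : 0 < c) (S : Set (EuclideanSpace ℝ (Fin n)))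
    (F : EuclideanSpace ℝ (Fin n) → EuclideanSpace ℝ (Fin n))
    (hF : ∀ a ∈ S, ∀ b ∈ S, c * dist a b ≤ dist (F a) (F b)) :
    Set.InjOn F S ∧
    LipschitzOnWith (Real.toNNReal (1 / c)) (Function.invFunOn F S) (F '' S) ∧
    ∀ a ∈ S, Function.invFunOn F S (F a) = a := by
  have hinj : Set.InjOn F S := by
    intro a ha b hb hab
    have h1 := hF a ha b hb
    rw [hab, dist_self] at h1
    have h2 : dist a b ≤ 0 := by nlinarith [dist_nonneg (x := a) (y := b)]
    exact dist_le_zero.1 h2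
  have hleft : ∀ a ∈ S, Function.invFunOn F S (F a) = a := fun a ha =>
    hinj.leftInvOn_invFunOn ha
  refine ⟨hinj, ?_, hleft⟩
  apply LipschitzOnWith.of_dist_le_mul
  rintro y₁ ⟨a₁, ha₁, rfl⟩ y₂ ⟨a₂, ha₂, rfl⟩
  rw [hleft a₁ ha₁, hleft a₂ ha₂, Real.coe_toNNReal _ (by positivity)]
  have h₁ := hF a₁ ha₁ a₂ ha₂
  rw [one_div_mul_eq_div, le_div_iff₀ hc]
  linarith [h₁]

theorem stmt13 {n d : ℕ} (hd : 0 < d) (hdn : d < n)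
    (E : Set (EuclideanSpace ℝ (Fin n)))
    (V : Submodule ℝ (EuclideanSpace ℝ (Fin n))) (hV : Module.finrank ℝ V = d)
    (θ : ℝ) (hθ : θ ∈ Ioo 0 (Real.pi / 2)) (r : ℝ) (hr : 0 < r)
    (hcone : ∀ a ∈ E, ∀ x ∈ E, x ∈ ball a r → x ≠ a →
      infDist (x - a) (V : Set (EuclideanSpace ℝ (Fin n))) < Real.sin θ * dist x a) :
    ((EMetric.diam E < ENNReal.ofReal r →
      (∀ a ∈ E, ∀ b ∈ E,
        Real.cos θ * dist a b ≤
          dist ((Submodule.orthogonalProjection V a : EuclideanSpace ℝ (Fin n)))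
            ((Submodule.orthogonalProjection V b : EuclideanSpace ℝ (Fin n)))) ∧
      Set.InjOn (fun a => (Submodule.orthogonalProjection V a : EuclideanSpace ℝ (Fin n))) E ∧
      ∃ g : EuclideanSpace ℝ (Fin n) → EuclideanSpace ℝ (Fin n),
        LipschitzOnWith (Real.toNNReal (1 / Real.cos θ)) g
          ((fun a => (Submodule.orthogonalProjection V a : EuclideanSpace ℝ (Fin n))) '' E) ∧
        ∀ a ∈ E, g ((Submodule.orthogonalProjection V a : EuclideanSpace ℝ (Fin n))) = a)) ∧
    ∃ (s : ℕ → Set (EuclideanSpace ℝ (Fin d)))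
      (f : ℕ → EuclideanSpace ℝ (Fin d) → EuclideanSpace ℝ (Fin n))
      (K : ℕ → NNReal),
      (∀ i, LipschitzOnWith (K i) (f i) (s i)) ∧
      μH[(d : ℝ)] (E \ ⋃ i, f i '' s i) = 0 := by
  have hc : 0 < Real.cos θ := by
    apply Real.cos_pos_of_mem_Ioo
    exact ⟨by linarith [hθ.1, Real.pi_pos], hθ.2⟩
  set F : EuclideanSpace ℝ (Fin n) → EuclideanSpace ℝ (Fin n) :=
    fun a => (Submodule.orthogonalProjection V a : EuclideanSpace ℝ (Fin n)) with hFdef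
  -- on any subset where all pairs are within distance r, we get the estimate
  have key : ∀ S : Set (EuclideanSpace ℝ (Fin n)), S ⊆ E →
      (∀ a ∈ S, ∀ b ∈ S, dist a b < r) →
      ∀ a ∈ S, ∀ b ∈ S, Real.cos θ * dist a b ≤ dist (F a) (F b) := by
    intro S hSE hSr a ha b hb
    by_cases hab : b = a
    · subst hab; simp
    · have h := hcone a (hSE ha) b (hSE hb) (mem_ball.2 (hSr b hb a ha)) hab
      exact proj_lower V hθ h
  constructor
  · intro hdiam
    have hEr : ∀ a ∈ E, ∀ b ∈ E, dist a b < r := fun a ha b hb =>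
      edist_lt_ofReal.1 (lt_of_le_of_lt (EMetric.edist_le_diam_of_mem ha hb) hdiam)
    have hlow := key E subset_rfl hEr
    obtain ⟨hinj, hlip, hlinv⟩ := lip_inv hc E F hlow
    exact ⟨hlow, hinj, Function.invFunOn F E, hlip, hlinv⟩
  · -- rectifiability
    haveI : FiniteDimensional ℝ V := inferInstance
    let B : OrthonormalBasis (Fin d) ℝ V := (stdOrthonormalBasis ℝ V).reindex (finCongr hV)
    let φ : EuclideanSpace ℝ (Fin d) ≃ₗᵢ[ℝ] V := B.repr.symm
    set u := TopologicalSpace.denseSeq (EuclideanSpace ℝ (Fin n)) with hu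
    let S : ℕ → Set (EuclideanSpace ℝ (Fin n)) := fun i => E ∩ ball (u i) (r / 3)
    have hSr : ∀ i, ∀ a ∈ S i, ∀ b ∈ S i, dist a b < r := by
      intro i a ha b hb
      have h1 : dist a (u i) < r / 3 := mem_ball.1 ha.2
      have h2 : dist b (u i) < r / 3 := mem_ball.1 hb.2
      calc dist a b ≤ dist a (u i) + dist (u i) b := dist_triangle _ _ _
        _ < r := by rw [dist_comm (u i) b]; linarith
    have hkey : ∀ i, ∀ a ∈ S i, ∀ b ∈ S i, Real.cos θ * dist a b ≤ dist (F a) (F b) :=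
      fun i => key (S i) (fun x hx => hx.1) (hSr i)
    refine ⟨fun i => {v | (φ v : EuclideanSpace ℝ (Fin n)) ∈ F '' S i},
      fun i v => Function.invFunOn F (S i) (φ v : EuclideanSpace ℝ (Fin n)),
      fun _ => Real.toNNReal (1 / Real.cos θ), ?_, ?_⟩
    · intro i
      obtain ⟨hinj, hlip, hlinv⟩ := lip_inv hc (S i) F (hkey i)
      apply LipschitzOnWith.of_dist_le_mul
      intro v hv w hw
      have := hlip.dist_le_mul _ hv _ hw
      calc dist (Function.invFunOn F (S i) (φ v : EuclideanSpace ℝ (Fin n)))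
            (Function.invFunOn F (S i) (φ w : EuclideanSpace ℝ (Fin n)))
          ≤ (Real.toNNReal (1 / Real.cos θ) : ℝ) *
            dist ((φ v : EuclideanSpace ℝ (Fin n))) ((φ w : EuclideanSpace ℝ (Fin n))) := this
        _ = (Real.toNNReal (1 / Real.cos θ) : ℝ) * dist v w := by
            rw [← Subtype.dist_eq, φ.dist_map]
    · have hcov : E ⊆ ⋃ i, (fun v => Function.invFunOn F (S i) (φ v : EuclideanSpace ℝ (Fin n))) ''
          {v | (φ v : EuclideanSpace ℝ (Fin n)) ∈ F '' S i} := by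
        intro x hx
        obtain ⟨i, hi⟩ := (TopologicalSpace.denseRange_denseSeq
          (EuclideanSpace ℝ (Fin n))).exists_dist_lt x (by positivity : (0:ℝ) < r / 3)
        have hxS : x ∈ S i := ⟨hx, mem_ball.2 (by rw [dist_comm] at hi ⊢; exact hi)⟩
        obtain ⟨hinj, hlip, hlinv⟩ := lip_inv hc (S i) F (hkey i)
        refine mem_iUnion.2 ⟨i, φ.symm ⟨F x, Submodule.coe_mem _⟩, ?_, ?_⟩
        · show ((φ (φ.symm ⟨F x, _⟩)) : EuclideanSpace ℝ (Fin n)) ∈ F '' S i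
          rw [φ.apply_symm_apply]
          exact ⟨x, hxS, rfl⟩
        · show Function.invFunOn F (S i) ((φ (φ.symm ⟨F x, _⟩)) : EuclideanSpace ℝ (Fin n)) = x
          rw [φ.apply_symm_apply]
          exact hlinv x hxS
      rw [Set.diff_eq_empty.2 hcov, measure_empty]
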